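/- Let (X,d), (Y,ρ) be semimetric spaces and f: X→Y satisfy φ₁(d(x,y)) ≤ ρ(f(x),f(y)) ≤ φ₂(d(x,y)) for all x,y∈X, where φ₁,φ₂:[0,∞)→[0,∞) satisfy φ₁(0)=φ₂(0)=0, φ₁≤φ₂ pointwise, φ₂ is nondecreasing, φ₂(uv) ≤ C·φ₂(u)·φ₂(v) for some C>0, φ₂(t) ≤ K·φ₁(t) for some K≥1, and φ₁ is a homeomorphism of [0,∞). Then f is an η-quasisymmetric mapping with η(t) = C·K²·φ₁(t). -/
import Mathlib


open Set Filter Topology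

structure IsSemimetric {X : Type*} (d : X → X → ℝ) : Prop where
  nonneg : ∀ x y, 0 ≤ d x y
  eq_iff : ∀ x y, d x y = 0 ↔ x = y
  symm : ∀ x y, d x y = d y x

/-- `η` is a homeomorphism of `[0,∞)` onto itself (increasing, `η 0 = 0`). -/
structure IsQSHomeo (η : ℝ → ℝ) : Prop where
  maps : ∀ t, 0 ≤ t → 0 ≤ η t
  zero : η 0 = 0
  strictMonoOn : StrictMonoOn η (Set.Ici 0)
  surjOn : ∀ s, 0 ≤ s → ∃ t, 0 ≤ t ∧ η t = s
  continuousOn : ContinuousOn η (Set.Ici 0)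

/-- `f` is an `η`-quasisymmetric mapping between the semimetric spaces `(X,d)` and `(Y,ρ)`. -/
def IsQuasisymmetric {X Y : Type*} (d : X → X → ℝ) (ρ : Y → Y → ℝ)
    (η : ℝ → ℝ) (f : X → Y) : Prop :=
  IsQSHomeo η ∧ ∀ (x a b : X) (t : ℝ), 0 < t →
    d x a ≤ t * d x b → ρ (f x) (f a) ≤ η t * ρ (f x) (f b)

structure IsTriangleFunction {X : Type*} (d : X → X → ℝ) (Φ : ℝ → ℝ → ℝ) : Prop where
  symm : ∀ u v, Φ u v = Φ v u
  mono : ∀ u u' v v', 0 ≤ u → u ≤ u' → 0 ≤ v → v ≤ v' → Φ u v ≤ Φ u' v'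
  zero : Φ 0 0 = 0
  tri : ∀ x y z, d x y ≤ Φ (d x z) (d y z)

def IsPtolemaic {X : Type*} (d : X → X → ℝ) : Prop :=
  ∀ x y z t : X, d x z * d t y ≤ d x y * d t z + d x t * d y z

def distSet {X : Type*} (d : X → X → ℝ) (A : Set X) : Set ℝ :=
  {r | ∃ x ∈ A, ∃ y ∈ A, r = d x y}

noncomputable def sdiam {X : Type*} (d : X → X → ℝ) (A : Set X) : ℝ :=
  sSup (distSet d A)

def spectrum' {X : Type*} (d : X → X → ℝ) : Set ℝ := {r | ∃ x y : X, r = d x y}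

def IsWeakSimilarity {X Y : Type*} (d : X → X → ℝ) (ρ : Y → Y → ℝ)
    (f : X → Y) (φ : ℝ → ℝ) : Prop :=
  Function.Bijective f ∧ StrictMonoOn φ (spectrum' d) ∧
    φ '' spectrum' d = spectrum' ρ ∧ ∀ x y, φ (d x y) = ρ (f x) (f y)

/-- The topology `τ_d` generated by a semimetric `d`. -/
def tauD {X : Type*} (d : X → X → ℝ) : TopologicalSpace X where
  IsOpen A := ∀ a ∈ A, ∃ r > 0, {x | d a x < r} ⊆ A
  isOpen_univ := fun _ _ => ⟨1, one_pos, fun _ _ => trivial⟩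
  isOpen_inter := fun A B hA hB a ha => by
    obtain ⟨r1, hr1, h1⟩ := hA a ha.1
    obtain ⟨r2, hr2, h2⟩ := hB a ha.2
    refine ⟨min r1 r2, lt_min hr1 hr2, fun x hx => ⟨h1 ?_, h2 ?_⟩⟩
    · have hx' : d a x < min r1 r2 := hx
      exact lt_of_lt_of_le hx' (min_le_left r1 r2)
    · have hx' : d a x < min r1 r2 := hx
      exact lt_of_lt_of_le hx' (min_le_right r1 r2)
  isOpen_sUnion := fun S hS a ha => by
    obtain ⟨A, hA, haA⟩ := ha
    obtain ⟨r, hr, h⟩ := hS A hA a haA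
    exact ⟨r, hr, fun x hx => ⟨A, hA, h hx⟩⟩

theorem stmt_4 {X Y : Type*} (d : X → X → ℝ) (ρ : Y → Y → ℝ) (f : X → Y)
    (φ₁ φ₂ : ℝ → ℝ) (C K : ℝ)
    (hd : IsSemimetric d) (hρ : IsSemimetric ρ)
    (hC : 0 < C) (hK : 1 ≤ K)
    (h10 : φ₁ 0 = 0) (h20 : φ₂ 0 = 0)
    (hle : ∀ t, 0 ≤ t → φ₁ t ≤ φ₂ t)
    (hmono : ∀ s t, 0 ≤ s → s ≤ t → φ₂ s ≤ φ₂ t)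
    (hsub : ∀ u v, 0 ≤ u → 0 ≤ v → φ₂ (u * v) ≤ C * φ₂ u * φ₂ v)
    (hK2 : ∀ t, 0 ≤ t → φ₂ t ≤ K * φ₁ t)
    (hhomeo : IsQSHomeo φ₁)
    (hbound : ∀ x y : X, φ₁ (d x y) ≤ ρ (f x) (f y) ∧ ρ (f x) (f y) ≤ φ₂ (d x y)) :
    IsQuasisymmetric d ρ (fun t => C * K ^ 2 * φ₁ t) f := by
  have hpos : 0 < C * K ^ 2 := by positivity
  constructor
  · refine ⟨fun t ht => ?_, by simp [hhomeo.zero], ?_, ?_, ?_⟩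
    · exact mul_nonneg hpos.le (hhomeo.maps t ht)
    · intro a ha b hb hab
      exact mul_lt_mul_of_pos_left (hhomeo.strictMonoOn ha hb hab) hpos
    · intro s hs
      obtain ⟨t, ht, hts⟩ := hhomeo.surjOn (s / (C * K ^ 2)) (div_nonneg hs hpos.le)
      exact ⟨t, ht, by rw [hts]; field_simp⟩
    · exact (continuousOn_const.mul hhomeo.continuousOn)
  · intro x a b t ht h
    have hdn := hd.nonneg
    have hρn := hρ.nonneg
    have h1 : ρ (f x) (f a) ≤ φ₂ (d x a) := (hbound x a).2
    have h2 : φ₂ (d x a) ≤ φ₂ (t * d x b) := hmono _ _ (hdn x a) h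
    have h3 : φ₂ (t * d x b) ≤ C * φ₂ t * φ₂ (d x b) := hsub t _ ht.le (hdn x b)
    have hφ1t : 0 ≤ φ₁ t := hhomeo.maps t ht.le
    have h4 : C * φ₂ t * φ₂ (d x b) ≤ C * (K * φ₁ t) * (K * ρ (f x) (f b)) := by
      apply mul_le_mul
      · exact mul_le_mul_of_nonneg_left (hK2 t ht.le) hC.le
      · calc φ₂ (d x b) ≤ K * φ₁ (d x b) := hK2 _ (hdn x b)
          _ ≤ K * ρ (f x) (f b) :=
            mul_le_mul_of_nonneg_left (hbound x b).1 (by linarith)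
      · exact (hhomeo.maps _ (hdn x b)).trans (hle _ (hdn x b))
      · positivity
    have : C * (K * φ₁ t) * (K * ρ (f x) (f b)) = C * K ^ 2 * φ₁ t * ρ (f x) (f b) := by ring
    simp only []
    linarith
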